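/- Let f, b ∈ ℝ^n be entrywise nonnegative vectors with ‖f‖_1 = 1 and ‖b‖_1 ≤ 1. Define B := ⟨3f − 2b, f⟩ · f f^⊤ + (b ∘ f) f^⊤ + f (b ∘ f)^⊤ + ⟨f − b, f⟩ · diag(f) + diag((2f − b) ∘ f). Then −4 I_n ⪯ B ⪯ 8 I_n in the positive semidefinite (Loewner) order. -/

import Mathlib

open Matrix

/-- The ℓ1 norm of a vector in ℝ^n. -/
noncomputable def l1norm {n : ℕ} (u : Fin n → ℝ) : ℝ := ∑ i, |u i|

/-- The Euclidean inner product on ℝ^n. -/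
noncomputable def dotp {n : ℕ} (u v : Fin n → ℝ) : ℝ := ∑ i, u i * v i

private lemma dot_vecMulVec {n : ℕ} (u v x : Fin n → ℝ) :
    x ⬝ᵥ (vecMulVec u v *ᵥ x) = (∑ i, x i * u i) * (∑ i, v i * x i) := by
  rw [Finset.sum_mul_sum]
  simp only [dotProduct, Matrix.mulVec, vecMulVec_apply, Finset.mul_sum]
  exact Finset.sum_congr rfl fun i _ => Finset.sum_congr rfl fun j _ => by ring

private lemma dot_diagonal' {n : ℕ} (d x : Fin n → ℝ) :
    x ⬝ᵥ (diagonal d *ᵥ x) = ∑ i, d i * x i ^ 2 := by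
  simp only [dotProduct, mulVec_diagonal]
  exact Finset.sum_congr rfl fun i _ => by ring

private lemma scalar_lower (p q s t Q R S X : ℝ) (hp0 : 0 ≤ p) (hq0 : 0 ≤ q) (hq1 : q ≤ 1)
    (hp1 : p ≤ 1) (hR0 : 0 ≤ R) (hS0 : 0 ≤ S) (hQ0 : 0 ≤ Q) (hsQ : s^2 ≤ Q) (hRQ : R ≤ Q)
    (hSQ : S ≤ Q) (hQX : Q ≤ X)
    (hcs1 : (q*s - t)^2 ≤ q*(Q - s^2)) (hcs2 : t^2 ≤ q*S) :
    -4*X ≤ (3*p - 2*q)*s^2 + 2*s*t + (p-q)*Q + 2*R - S := by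
  nlinarith [sq_nonneg (s + (t - q*s)), mul_nonneg hp0 (sq_nonneg s), mul_nonneg hp0 hQ0,
    mul_nonneg (sub_nonneg.2 hq1) (sub_nonneg.2 hsQ)]

private lemma scalar_upper (p q s t Q R S X : ℝ) (hp0 : 0 ≤ p) (hq0 : 0 ≤ q) (hq1 : q ≤ 1)
    (hp1 : p ≤ 1) (hR0 : 0 ≤ R) (hS0 : 0 ≤ S) (hQ0 : 0 ≤ Q) (hsQ : s^2 ≤ Q) (hRQ : R ≤ Q)
    (hSQ : S ≤ Q) (hQX : Q ≤ X)
    (hcs1 : (q*s - t)^2 ≤ q*(Q - s^2)) (hcs2 : t^2 ≤ q*S) :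
    (3*p - 2*q)*s^2 + 2*s*t + (p-q)*Q + 2*R - S ≤ 8*X := by
  nlinarith [sq_nonneg (s - t), sq_nonneg s, mul_nonneg hq0 hS0]

set_option maxHeartbeats 1000000 in
/-- −4 I_n ⪯ B ⪯ 8 I_n where
B = ⟨3f − 2b, f⟩ f f^⊤ + (b ∘ f) f^⊤ + f (b ∘ f)^⊤ + ⟨f − b, f⟩ diag(f)
    + diag((2f − b) ∘ f). -/
theorem stmt_13 {n : ℕ} (f b : Fin n → ℝ) (hf : ∀ i, 0 ≤ f i) (hb : ∀ i, 0 ≤ b i)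
    (hf1 : l1norm f = 1) (hb1 : l1norm b ≤ 1) :
    (((dotp ((3 : ℝ) • f - (2 : ℝ) • b) f) • Matrix.vecMulVec f f
        + Matrix.vecMulVec (b * f) f + Matrix.vecMulVec f (b * f)
        + (dotp (f - b) f) • Matrix.diagonal f
        + Matrix.diagonal (((2 : ℝ) • f - b) * f))
      - (-(4 : ℝ)) • (1 : Matrix (Fin n) (Fin n) ℝ)).PosSemidef ∧
    ((8 : ℝ) • (1 : Matrix (Fin n) (Fin n) ℝ)
      - ((dotp ((3 : ℝ) • f - (2 : ℝ) • b) f) • Matrix.vecMulVec f f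
        + Matrix.vecMulVec (b * f) f + Matrix.vecMulVec f (b * f)
        + (dotp (f - b) f) • Matrix.diagonal f
        + Matrix.diagonal (((2 : ℝ) • f - b) * f))).PosSemidef := by
  set p : ℝ := ∑ i, f i * f i with hp_def
  set q : ℝ := ∑ i, b i * f i with hq_def
  set B : Matrix (Fin n) (Fin n) ℝ :=
    ((dotp ((3 : ℝ) • f - (2 : ℝ) • b) f) • Matrix.vecMulVec f f
        + Matrix.vecMulVec (b * f) f + Matrix.vecMulVec f (b * f)
        + (dotp (f - b) f) • Matrix.diagonal f
        + Matrix.diagonal (((2 : ℝ) • f - b) * f)) with hB_def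
  -- basic scalar facts
  have hf1' : ∑ i, f i = 1 := by
    rw [← hf1]; exact (Finset.sum_congr rfl fun i _ => (abs_of_nonneg (hf i)).symm)
  have hb1' : ∑ i, b i ≤ 1 := by
    refine le_trans (le_of_eq ?_) hb1
    exact (Finset.sum_congr rfl fun i _ => (abs_of_nonneg (hb i)).symm)
  have hfle1 : ∀ i, f i ≤ 1 := by
    intro i
    calc f i ≤ ∑ j, f j := Finset.single_le_sum (fun j _ => hf j) (Finset.mem_univ i)
    _ = 1 := hf1'
  have hble1 : ∀ i, b i ≤ 1 := by
    intro i
    calc b i ≤ ∑ j, b j := Finset.single_le_sum (fun j _ => hb j) (Finset.mem_univ i)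
    _ ≤ 1 := hb1'
  have hp0 : 0 ≤ p := Finset.sum_nonneg fun i _ => mul_nonneg (hf i) (hf i)
  have hq0 : 0 ≤ q := Finset.sum_nonneg fun i _ => mul_nonneg (hb i) (hf i)
  have hp1 : p ≤ 1 := by
    rw [hp_def, ← hf1']
    exact Finset.sum_le_sum fun i _ => by nlinarith [hf i, hfle1 i]
  have hq1 : q ≤ 1 := by
    rw [hq_def, ← hf1']
    exact Finset.sum_le_sum fun i _ => by nlinarith [hf i, hble1 i]
  have hd1 : dotp ((3 : ℝ) • f - (2 : ℝ) • b) f = 3*p - 2*q := by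
    rw [dotp, hp_def, hq_def, Finset.mul_sum, Finset.mul_sum, ← Finset.sum_sub_distrib]
    exact Finset.sum_congr rfl fun i _ => by simp [Pi.sub_apply]; ring
  have hd2 : dotp (f - b) f = p - q := by
    rw [dotp, hp_def, hq_def, ← Finset.sum_sub_distrib]
    exact Finset.sum_congr rfl fun i _ => by simp [Pi.sub_apply]; ring
  -- the quadratic form of B
  have hquad : ∀ x : Fin n → ℝ,
      x ⬝ᵥ (B *ᵥ x) = (3*p - 2*q)*(∑ i, f i * x i)^2
        + 2*(∑ i, f i * x i)*(∑ i, b i * f i * x i)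
        + (p - q)*(∑ i, f i * x i ^ 2)
        + 2*(∑ i, f i * f i * x i ^ 2) - (∑ i, b i * f i * x i ^ 2) := by
    intro x
    rw [hB_def, Matrix.add_mulVec, Matrix.add_mulVec, Matrix.add_mulVec, Matrix.add_mulVec,
      Matrix.smul_mulVec, Matrix.smul_mulVec,
      dotProduct_add, dotProduct_add, dotProduct_add, dotProduct_add,
      dotProduct_smul, dotProduct_smul,
      dot_vecMulVec, dot_vecMulVec, dot_vecMulVec, dot_diagonal', dot_diagonal', hd1, hd2]
    have e1 : (∑ i, x i * f i) = ∑ i, f i * x i :=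
      Finset.sum_congr rfl fun i _ => mul_comm _ _
    have e2 : (∑ i, x i * (b * f) i) = ∑ i, b i * f i * x i :=
      Finset.sum_congr rfl fun i _ => by simp [Pi.mul_apply]; ring
    have e3 : (∑ i, (b * f) i * x i) = ∑ i, b i * f i * x i :=
      Finset.sum_congr rfl fun i _ => by simp [Pi.mul_apply]
    have e4 : (∑ i, (((2 : ℝ) • f - b) * f) i * x i ^ 2)
        = 2*(∑ i, f i * f i * x i ^ 2) - (∑ i, b i * f i * x i ^ 2) := by
      rw [Finset.mul_sum, ← Finset.sum_sub_distrib]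
      exact Finset.sum_congr rfl fun i _ => by
        simp [Pi.mul_apply, Pi.sub_apply, Pi.smul_apply]; ring
    rw [e1, e2, e3, e4]
    simp only [smul_eq_mul]
    ring
  -- bounds on the quadratic form
  have hbound : ∀ x : Fin n → ℝ,
      -4 * (∑ i, x i ^ 2) ≤ x ⬝ᵥ (B *ᵥ x) ∧ x ⬝ᵥ (B *ᵥ x) ≤ 8 * (∑ i, x i ^ 2) := by
    intro x
    set s : ℝ := ∑ i, f i * x i with hs_def
    set t : ℝ := ∑ i, b i * f i * x i with ht_def
    set Q : ℝ := ∑ i, f i * x i ^ 2 with hQ_def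
    set R : ℝ := ∑ i, f i * f i * x i ^ 2 with hR_def
    set S : ℝ := ∑ i, b i * f i * x i ^ 2 with hS_def
    set X : ℝ := ∑ i, x i ^ 2 with hX_def
    have hQ0 : 0 ≤ Q := Finset.sum_nonneg fun i _ => mul_nonneg (hf i) (sq_nonneg _)
    have hR0 : 0 ≤ R := Finset.sum_nonneg fun i _ =>
      mul_nonneg (mul_nonneg (hf i) (hf i)) (sq_nonneg _)
    have hS0 : 0 ≤ S := Finset.sum_nonneg fun i _ =>
      mul_nonneg (mul_nonneg (hb i) (hf i)) (sq_nonneg _)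
    have hRQ : R ≤ Q := Finset.sum_le_sum fun i _ => by
      nlinarith [mul_nonneg (sub_nonneg.2 (hfle1 i)) (mul_nonneg (hf i) (sq_nonneg (x i)))]
    have hSQ : S ≤ Q := Finset.sum_le_sum fun i _ => by
      nlinarith [mul_nonneg (sub_nonneg.2 (hble1 i)) (mul_nonneg (hf i) (sq_nonneg (x i)))]
    have hQX : Q ≤ X := Finset.sum_le_sum fun i _ => by
      nlinarith [mul_nonneg (sub_nonneg.2 (hfle1 i)) (sq_nonneg (x i))]
    have hsQ : s ^ 2 ≤ Q := by
      have := Finset.sum_sq_le_sum_mul_sum_of_sq_eq_mul Finset.univ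
        (r := fun i => f i * x i) (f := f) (g := fun i => f i * x i ^ 2)
        (fun i _ => hf i) (fun i _ => mul_nonneg (hf i) (sq_nonneg _))
        (fun i _ => by ring)
      rw [hf1'] at this
      simpa using this
    have hcs2 : t ^ 2 ≤ q * S := by
      have := Finset.sum_sq_le_sum_mul_sum_of_sq_eq_mul Finset.univ
        (r := fun i => b i * f i * x i) (f := fun i => b i * f i)
        (g := fun i => b i * f i * x i ^ 2)
        (fun i _ => mul_nonneg (hb i) (hf i))
        (fun i _ => mul_nonneg (mul_nonneg (hb i) (hf i)) (sq_nonneg _))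
        (fun i _ => by ring)
      simpa using this
    have hGsum : (∑ i, f i * (s - x i) ^ 2) = Q - s ^ 2 := by
      have : (∑ i, f i * (s - x i) ^ 2)
          = s^2 * (∑ i, f i) - (2*s) * (∑ i, f i * x i) + ∑ i, f i * x i ^ 2 := by
        rw [Finset.mul_sum, Finset.mul_sum, ← Finset.sum_sub_distrib, ← Finset.sum_add_distrib]
        exact Finset.sum_congr rfl fun i _ => by ring
      rw [this, hf1', ← hs_def, ← hQ_def]; ring
    have hcs1 : (q * s - t) ^ 2 ≤ q * (Q - s ^ 2) := by
      have hr : (∑ i, b i * f i * (s - x i)) = q * s - t := by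
        rw [hq_def, ht_def, Finset.sum_mul, ← Finset.sum_sub_distrib]
        exact Finset.sum_congr rfl fun i _ => by ring
      have hcs := Finset.sum_sq_le_sum_mul_sum_of_sq_eq_mul Finset.univ
        (r := fun i => b i * f i * (s - x i)) (f := fun i => b i * b i * f i)
        (g := fun i => f i * (s - x i) ^ 2)
        (fun i _ => mul_nonneg (mul_nonneg (hb i) (hb i)) (hf i))
        (fun i _ => mul_nonneg (hf i) (sq_nonneg _))
        (fun i _ => by ring)
      rw [hr, hGsum] at hcs
      have hFq : (∑ i, b i * b i * f i) ≤ q := by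
        rw [hq_def]
        exact Finset.sum_le_sum fun i _ => by
          nlinarith [mul_nonneg (mul_nonneg (sub_nonneg.2 (hble1 i)) (hb i)) (hf i)]
      have hG0 : (0:ℝ) ≤ Q - s ^ 2 := sub_nonneg.2 hsQ
      calc (q * s - t) ^ 2 ≤ (∑ i, b i * b i * f i) * (Q - s ^ 2) := hcs
        _ ≤ q * (Q - s ^ 2) := mul_le_mul_of_nonneg_right hFq hG0
    rw [hquad x, ← hs_def, ← ht_def, ← hQ_def, ← hR_def, ← hS_def]
    exact ⟨scalar_lower p q s t Q R S X hp0 hq0 hq1 hp1 hR0 hS0 hQ0 hsQ hRQ hSQ hQX hcs1 hcs2,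
      scalar_upper p q s t Q R S X hp0 hq0 hq1 hp1 hR0 hS0 hQ0 hsQ hRQ hSQ hQX hcs1 hcs2⟩
  -- Hermitian-ness of B
  have hherm : B.IsHermitian := by
    rw [hB_def]
    unfold Matrix.IsHermitian
    ext i j
    simp only [Matrix.conjTranspose_apply, Matrix.add_apply, Matrix.smul_apply,
      vecMulVec_apply, Matrix.diagonal_apply, Pi.mul_apply, Pi.smul_apply,
      Pi.sub_apply, star_trivial, smul_eq_mul]
    rcases eq_or_ne i j with h | h
    · subst h; ring
    · simp [h, h.symm]; ring
  have hXdot : ∀ x : Fin n → ℝ, x ⬝ᵥ x = ∑ i, x i ^ 2 := by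
    intro x
    exact Finset.sum_congr rfl fun i _ => (sq (x i)).symm
  have hsmul1 : ∀ c : ℝ, (c • (1 : Matrix (Fin n) (Fin n) ℝ)).IsHermitian := by
    intro c
    unfold Matrix.IsHermitian
    rw [Matrix.conjTranspose_smul, star_trivial, Matrix.isHermitian_one.eq]
  constructor
  · refine Matrix.PosSemidef.of_dotProduct_mulVec_nonneg (hherm.sub (hsmul1 (-4))) fun x => ?_
    rw [star_trivial, Matrix.sub_mulVec, dotProduct_sub, Matrix.smul_mulVec,
      Matrix.one_mulVec, dotProduct_smul, smul_eq_mul, hXdot x]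
    have := (hbound x).1
    linarith
  · refine Matrix.PosSemidef.of_dotProduct_mulVec_nonneg ((hsmul1 8).sub hherm) fun x => ?_
    rw [star_trivial, Matrix.sub_mulVec, dotProduct_sub, Matrix.smul_mulVec,
      Matrix.one_mulVec, dotProduct_smul, smul_eq_mul, hXdot x]
    have := (hbound x).2
    linarith
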